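/- In the construction G' = M(G, π, A): if u ∈ A, v ∈ B, and (u,v) ∉ E(G'), then π(x) < π(v) for every x ∈ N(u) ∩ B. In particular if additionally (u,v) ∈ E(G) we reach a contradiction, so G ⊆ G'. -/
import Mathlib

/-- In `G' = M(G, π, A)`: if `u ∈ A`, `v ∈ B` and `(u,v) ∉ E(G')`, then `π x < π v`
for every `x ∈ N(u) ∩ B`; in particular `(u,v) ∉ E(G)`. -/
theorem stmt9 (n : ℕ) (G : SimpleGraph (Fin n)) [DecidableRel G.Adj]
    (π : Equiv.Perm (Fin n)) (A : Finset (Fin n)) (f : Fin n → ℝ)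
    (hB : ∀ u, u ∉ A → f u = (n : ℝ) + ((π u : ℕ) + 1))
    (hA0 : ∀ u ∈ A, ((G.neighborFinset u).filter (· ∉ A)) = ∅ → f u = 0)
    (hAmax : ∀ u ∈ A, ∀ hne : ((G.neighborFinset u).filter (· ∉ A)).Nonempty,
      f u = ((((G.neighborFinset u).filter (· ∉ A)).sup' hne fun x => (π x : ℕ) + 1 : ℕ) : ℝ))
    (u v : Fin n) (hu : u ∈ A) (hv : v ∉ A)
    (hnadj : ¬ (SimpleGraph.fromRel fun a c => |f a - f c| ≤ (n : ℝ)).Adj u v) :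
    (∀ x, G.Adj u x → x ∉ A → π x < π v) ∧ ¬ G.Adj u v := by
  have hne : u ≠ v := fun h => hv (h ▸ hu)
  rw [SimpleGraph.fromRel_adj] at hnadj
  push_neg at hnadj
  have hgap : (n : ℝ) < |f u - f v| := (hnadj hne).1
  have hfv : f v = (n : ℝ) + ((π v : ℕ) + 1) := hB v hv
  -- f u < π v + 1
  have key : f u < ((π v : ℕ) + 1 : ℝ) := by
    by_contra h
    push_neg at h
    apply absurd hgap
    push_neg
    rw [abs_le]
    constructor
    · have : ((π v : ℕ) : ℝ) + 1 ≤ (n : ℝ) + ((π v : ℕ) + 1) := by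
        have : (0:ℝ) ≤ n := Nat.cast_nonneg n
        linarith
      linarith
    · -- f u ≤ n : either 0 or sup ≤ n
      have hfu_le : f u ≤ (n : ℝ) := by
        rcases ((G.neighborFinset u).filter (· ∉ A)).eq_empty_or_nonempty with he | hne'
        · rw [hA0 u hu he]; exact Nat.cast_nonneg n
        · rw [hAmax u hu hne']
          have : (((G.neighborFinset u).filter (· ∉ A)).sup' hne' fun x => (π x : ℕ) + 1) ≤ n := by
            apply Finset.sup'_le
            intro x _
            exact (π x).isLt
          exact_mod_cast this
      linarith
  constructor
  · intro x hadj hxA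
    have hxmem : x ∈ (G.neighborFinset u).filter (· ∉ A) := by
      simp [SimpleGraph.mem_neighborFinset, hadj, hxA]
    have hne' : ((G.neighborFinset u).filter (· ∉ A)).Nonempty := ⟨x, hxmem⟩
    have hle : ((π x : ℕ) + 1 : ℕ) ≤ (((G.neighborFinset u).filter (· ∉ A)).sup' hne' fun x => (π x : ℕ) + 1) :=
      Finset.le_sup' (fun x => (π x : ℕ) + 1) hxmem
    have := hAmax u hu hne'
    have hlt : ((π x : ℕ) + 1 : ℝ) < ((π v : ℕ) + 1 : ℝ) := by
      calc ((π x : ℕ) + 1 : ℝ) ≤ f u := by rw [this]; exact_mod_cast hle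
        _ < _ := key
    have : (π x : ℕ) < (π v : ℕ) := by exact_mod_cast (by linarith : ((π x : ℕ):ℝ) < (π v : ℕ))
    exact this
  · intro hadj
    -- v itself is in the filter, contradiction
    have hxmem : v ∈ (G.neighborFinset u).filter (· ∉ A) := by
      simp [SimpleGraph.mem_neighborFinset, hadj, hv]
    have hne' : ((G.neighborFinset u).filter (· ∉ A)).Nonempty := ⟨v, hxmem⟩
    have hle : ((π v : ℕ) + 1 : ℕ) ≤ (((G.neighborFinset u).filter (· ∉ A)).sup' hne' fun x => (π x : ℕ) + 1) :=
      Finset.le_sup' (fun x => (π x : ℕ) + 1) hxmem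
    have := hAmax u hu hne'
    have : ((π v : ℕ) + 1 : ℝ) ≤ f u := by rw [this]; exact_mod_cast hle
    linarith
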